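/- arXiv:1505.03378 — 2 statements merged into one kernel-verified Lean document; each statement's English description precedes it below -/
import Mathlib

section
/- For c > 0 and Y a nonzero real number, the principal-value integral (1/(2πi)) ∫_{c−i∞}^{c+i∞} e^{Ys} ds/s equals 1 if Y > 0 and 0 if Y < 0. -/
open Filter MeasureTheory Set Complex intervalIntegral
open scoped FourierTransform Real RealInnerProductSpace

lemma keygen (a b r : ℝ) (hr : 0 < r) :
    Tendsto (fun u : ℝ => (a * u + b) * Real.exp (-(r * u))) atTop (nhds 0) := by
  have hmul : Tendsto (fun u : ℝ => r * u) atTop atTop := tendsto_id.const_mul_atTop hr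
  have h1 : Tendsto (fun u : ℝ => (r * u) ^ 1 * Real.exp (-(r * u))) atTop (nhds 0) :=
    (Real.tendsto_pow_mul_exp_neg_atTop_nhds_zero 1).comp hmul
  have h2 : Tendsto (fun u : ℝ => Real.exp (-(r * u))) atTop (nhds 0) :=
    Real.tendsto_exp_atBot.comp (tendsto_neg_atTop_atBot.comp hmul)
  have h3 : Tendsto (fun u : ℝ => (a / r) * ((r * u) ^ 1 * Real.exp (-(r * u)))
      + b * Real.exp (-(r * u))) atTop (nhds ((a / r) * 0 + b * 0)) :=
    (h1.const_mul _).add (h2.const_mul _)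
  simp only [mul_zero, add_zero] at h3
  refine h3.congr (fun u => ?_)
  field_simp

lemma hasDerivAt_G (s : ℂ) (hs : s ≠ 0) (z : ℂ) :
    HasDerivAt (fun z : ℂ => -((z / s + 1 / s ^ 2) * Complex.exp (-(s * z))))
      (z * Complex.exp (-(s * z))) z := by
  have h1 : HasDerivAt (fun z : ℂ => z / s + 1 / s ^ 2) (1 / s) z :=
    ((hasDerivAt_id z).div_const s).add_const _
  have h2 : HasDerivAt (fun z : ℂ => Complex.exp (-(s * z)))
      (Complex.exp (-(s * z)) * (-s)) z := by
    simpa using (((hasDerivAt_id z).const_mul s).neg).cexp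
  have := (h1.mul h2).neg
  refine this.congr_deriv (Eq.symm ?_)
  field_simp
  ring

lemma tendsto_F (s : ℂ) (hs : 0 < s.re) :
    Tendsto (fun u : ℝ => -((((u : ℂ)) / s + 1 / s ^ 2) * Complex.exp (-(s * u)))) atTop
      (nhds 0) := by
  rw [tendsto_zero_iff_norm_tendsto_zero]
  refine squeeze_zero' (Eventually.of_forall fun u => norm_nonneg _) ?_
    (keygen (1 / ‖s‖) (1 / ‖s‖ ^ 2) s.re hs)
  filter_upwards [eventually_ge_atTop (0 : ℝ)] with u hu
  have hre : (-(s * (u : ℂ))).re = -(s.re * u) := by simp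
  rw [norm_neg, norm_mul, Complex.norm_exp, hre]
  gcongr
  calc ‖(u : ℂ) / s + 1 / s ^ 2‖ ≤ ‖(u : ℂ) / s‖ + ‖1 / (s ^ 2)‖ := norm_add_le _ _
    _ = 1 / ‖s‖ * u + 1 / ‖s‖ ^ 2 := by
        rw [norm_div, norm_div, norm_pow, Complex.norm_real, Real.norm_of_nonneg hu]
        simp [div_eq_mul_inv]
        ring

lemma real_integrableOn (r : ℝ) (hr : 0 < r) :
    IntegrableOn (fun u : ℝ => u * Real.exp (-(r * u))) (Ioi 0) := by
  have hderiv : ∀ x ∈ Ici (0 : ℝ),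
      HasDerivAt (fun u : ℝ => -((u / r + 1 / r ^ 2) * Real.exp (-(r * u))))
        (x * Real.exp (-(r * x))) x := by
    intro x _
    have h1 : HasDerivAt (fun u : ℝ => u / r + 1 / r ^ 2) (1 / r) x :=
      ((hasDerivAt_id x).div_const r).add_const _
    have h2 : HasDerivAt (fun u : ℝ => Real.exp (-(r * u)))
        (Real.exp (-(r * x)) * (-r)) x := by
      simpa using (((hasDerivAt_id x).const_mul r).neg).exp
    have := (h1.mul h2).neg
    refine this.congr_deriv (Eq.symm ?_)
    field_simp
    ring
  have htend : Tendsto (fun u : ℝ => -((u / r + 1 / r ^ 2) * Real.exp (-(r * u)))) atTop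
      (nhds 0) := by
    have := (keygen (1 / r) (1 / r ^ 2) r hr).neg
    rw [neg_zero] at this
    refine this.congr fun u => ?_
    ring_nf
  exact integrableOn_Ioi_deriv_of_nonneg' hderiv
    (fun x hx => mul_nonneg (le_of_lt hx) (Real.exp_pos _).le) htend

lemma cplx_integrableOn (s : ℂ) (hs : 0 < s.re) :
    IntegrableOn (fun u : ℝ => (u : ℂ) * Complex.exp (-(s * u))) (Ioi 0) := by
  refine Integrable.mono' (real_integrableOn s.re hs) ?_ ?_
  · exact (Complex.continuous_ofReal.mul
      (Complex.continuous_exp.comp (by fun_prop))).aestronglyMeasurable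
  · filter_upwards [ae_restrict_mem measurableSet_Ioi] with u hu
    have hre : (-(s * (u : ℂ))).re = -(s.re * u) := by simp
    rw [norm_mul, Complex.norm_exp, hre,
      Complex.norm_real, Real.norm_of_nonneg (le_of_lt hu)]

lemma cplx_integral (s : ℂ) (hs : 0 < s.re) :
    ∫ u in Ioi (0 : ℝ), (u : ℂ) * Complex.exp (-(s * u)) = (s ^ 2)⁻¹ := by
  have hs0 : s ≠ 0 := fun h => by simp [h] at hs
  have := integral_Ioi_of_hasDerivAt_of_tendsto
    (f := fun u : ℝ => -((((u : ℂ)) / s + 1 / s ^ 2) * Complex.exp (-(s * u))))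
    (f' := fun u : ℝ => (u : ℂ) * Complex.exp (-(s * u))) (a := 0)
    (Continuous.continuousWithinAt (by fun_prop))
    (fun x _ => (hasDerivAt_G s hs0 x).comp_ofReal)
    (cplx_integrableOn s hs) (tendsto_F s hs)
  rw [this]
  simp [one_div]

noncomputable def gfun (c : ℝ) : ℝ → ℂ :=
  Set.indicator (Ioi 0) (fun u : ℝ => (u : ℂ) * Complex.exp (-((c : ℂ) * u)))

lemma gfun_int (c : ℝ) (hc : 0 < c) : Integrable (gfun c) := by
  rw [gfun, integrable_indicator_iff measurableSet_Ioi]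
  exact cplx_integrableOn c (by simpa using hc)

lemma fourier_gfun (c : ℝ) (hc : 0 < c) (ξ : ℝ) :
    (𝓕 (gfun c)) ξ = (((c : ℂ) + (2 * π * ξ) * Complex.I) ^ 2)⁻¹ := by
  rw [Real.fourier_eq']
  simp only [RCLike.inner_apply, conj_trivial]
  have : ∀ v : ℝ, Complex.exp (↑(-2 * π * (ξ * v)) * Complex.I) • gfun c v =
      Set.indicator (Ioi 0)
        (fun v : ℝ => (v : ℂ) *
          Complex.exp (-(((c : ℂ) + (2 * π * ξ) * Complex.I) * v))) v := by
    intro v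
    by_cases h : v ∈ Ioi (0 : ℝ)
    · simp only [gfun, Set.indicator_of_mem h, smul_eq_mul]
      rw [mul_comm, mul_assoc, ← Complex.exp_add]
      congr 2
      push_cast
      ring
    · simp [gfun, Set.indicator_of_notMem h]
  rw [MeasureTheory.integral_congr_ae (Eventually.of_forall this),
    MeasureTheory.integral_indicator measurableSet_Ioi]
  exact cplx_integral _ (by simpa using hc)

lemma fourier_gfun_int (c : ℝ) (hc : 0 < c) : Integrable (𝓕 (gfun c)) := by
  rw [show 𝓕 (gfun c) = fun ξ : ℝ => (((c : ℂ) + (2 * π * ξ) * Complex.I) ^ 2)⁻¹ from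
    funext (fourier_gfun c hc)]
  refine Integrable.mono' (((integrable_inv_one_add_sq).const_mul (min (c ^ 2) 1)⁻¹)) ?_ ?_
  · apply Continuous.aestronglyMeasurable
    refine Continuous.inv₀ (by fun_prop) (fun ξ => ?_)
    intro h
    rw [pow_eq_zero_iff (by norm_num : 2 ≠ 0)] at h
    have := congrArg Complex.re h
    simp at this
    exact hc.ne' this
  · refine Eventually.of_forall fun ξ => ?_
    have habs : ‖(c : ℂ) + (2 * π * ξ) * Complex.I‖ ^ 2
        = c ^ 2 + (2 * π * ξ) ^ 2 := by
      rw [← Complex.normSq_eq_norm_sq]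
      rw [show ((c : ℂ) + (2 * π * ξ) * Complex.I) = Complex.mk c (2 * π * ξ) by
        simp [Complex.ext_iff]]
      simp [Complex.normSq_mk]; ring
    rw [norm_inv, norm_pow, habs]
    have hπ : (1 : ℝ) ≤ 4 * π ^ 2 := by nlinarith [Real.pi_gt_three]
    have hmin : 0 < min (c ^ 2) 1 := lt_min (by positivity) one_pos
    have key : min (c ^ 2) 1 * (1 + ξ ^ 2) ≤ c ^ 2 + (2 * π * ξ) ^ 2 := by
      have h1 : min (c ^ 2) 1 ≤ c ^ 2 := min_le_left _ _
      have h2 : min (c ^ 2) 1 * ξ ^ 2 ≤ ξ ^ 2 := by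
        nlinarith [min_le_right (c ^ 2) (1:ℝ), sq_nonneg ξ]
      nlinarith [sq_nonneg (π * ξ), sq_nonneg ξ]
    rw [inv_mul_eq_div, div_eq_mul_inv, ← mul_inv]
    apply inv_anti₀
    · positivity
    · linarith [key]

lemma gfun_contAt (c Y : ℝ) (hY : Y ≠ 0) : ContinuousAt (gfun c) Y := by
  rcases hY.lt_or_gt with h | h
  · have hev : gfun c =ᶠ[nhds Y] (fun _ => 0) := by
      filter_upwards [Iio_mem_nhds h] with u hu
      exact Set.indicator_of_notMem (by simpa using le_of_lt hu) _
    exact continuousAt_const.congr hev.symm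
  · have hev : gfun c =ᶠ[nhds Y]
        (fun u : ℝ => (u : ℂ) * Complex.exp (-((c : ℂ) * u))) := by
      filter_upwards [Ioi_mem_nhds h] with u hu
      exact Set.indicator_of_mem hu _
    exact (Continuous.continuousAt (by fun_prop)).congr hev.symm

lemma full_line_integral (c Y : ℝ) (hc : 0 < c) (hY : Y ≠ 0) :
    ∫ t : ℝ, Complex.exp ((t : ℂ) * Y * Complex.I) * (((c : ℂ) + t * Complex.I) ^ 2)⁻¹
      = (2 * π : ℝ) • gfun c Y := by
  have hinv := (gfun_int c hc).fourierInv_fourier_eq (fourier_gfun_int c hc) (gfun_contAt c Y hY)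
  rw [Real.fourierInv_eq'] at hinv
  set f : ℝ → ℂ := fun t => Complex.exp ((t : ℂ) * Y * Complex.I) *
    (((c : ℂ) + t * Complex.I) ^ 2)⁻¹ with hf
  have hsub : ∀ ξ : ℝ, Complex.exp ((↑(2 * π * (inner ℝ ξ Y : ℝ))) * Complex.I) • (𝓕 (gfun c)) ξ
      = f (2 * π * ξ) := by
    intro ξ
    rw [fourier_gfun c hc, hf, RCLike.inner_apply, conj_trivial, smul_eq_mul]
    push_cast
    ring_nf
  rw [MeasureTheory.integral_congr_ae (Eventually.of_forall hsub),
    MeasureTheory.Measure.integral_comp_mul_left f (2 * π)] at hinv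
  have h2π : |(2 * π : ℝ)⁻¹| = (2 * π)⁻¹ := abs_of_pos (by positivity)
  rw [h2π] at hinv
  have : (2 * π : ℝ) • ((2 * π : ℝ)⁻¹ • ∫ t, f t) = (2 * π : ℝ) • gfun c Y :=
    congrArg _ hinv
  rwa [smul_smul, mul_inv_cancel₀ (by positivity), one_smul] at this

lemma hne (c : ℝ) (hc : 0 < c) (t : ℝ) : (c : ℂ) + t * Complex.I ≠ 0 := by
  intro h
  have := congrArg Complex.re h
  simp at this
  exact hc.ne' this

lemma F_int (c Y : ℝ) (hc : 0 < c) :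
    Integrable (fun t : ℝ =>
      Complex.exp ((t : ℂ) * Y * Complex.I) * (((c : ℂ) + t * Complex.I) ^ 2)⁻¹) := by
  refine Integrable.mono' (((integrable_inv_one_add_sq).const_mul (min (c ^ 2) 1)⁻¹)) ?_ ?_
  · apply Continuous.aestronglyMeasurable
    apply Continuous.mul (by fun_prop)
    exact Continuous.inv₀ (by fun_prop) (fun t => pow_ne_zero _ (hne c hc t))
  · refine Eventually.of_forall fun t => ?_
    have habs : ‖(c : ℂ) + t * Complex.I‖ ^ 2 = c ^ 2 + t ^ 2 := by
      rw [← Complex.normSq_eq_norm_sq]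
      rw [show ((c : ℂ) + (t : ℂ) * Complex.I) = Complex.mk c t by simp [Complex.ext_iff]]
      simp [Complex.normSq_mk]; ring
    have hexp : ‖Complex.exp ((t : ℂ) * Y * Complex.I)‖ = 1 := by
      rw [Complex.norm_exp]
      norm_num [Complex.mul_I_re]
    rw [norm_mul, hexp, one_mul, norm_inv, norm_pow, habs]
    have hmin : 0 < min (c ^ 2) 1 := lt_min (by positivity) one_pos
    have key : min (c ^ 2) 1 * (1 + t ^ 2) ≤ c ^ 2 + t ^ 2 := by
      have h1 : min (c ^ 2) 1 ≤ c ^ 2 := min_le_left _ _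
      have h2 : min (c ^ 2) 1 * t ^ 2 ≤ t ^ 2 := by
        nlinarith [min_le_right (c ^ 2) (1:ℝ), sq_nonneg t]
      nlinarith
    rw [inv_mul_eq_div, div_eq_mul_inv, ← mul_inv]
    apply inv_anti₀
    · positivity
    · linarith [key]

/-- For `c > 0` and `Y ≠ 0` real, the principal-value integral
`(1/(2πi)) ∫_{c-i∞}^{c+i∞} e^{Ys} ds/s` equals `1` if `Y > 0` and `0` if `Y < 0`,
parametrizing `s = c + it`. -/
theorem perron_exponential_integral (c : ℝ) (hc : 0 < c) (Y : ℝ) (hY : Y ≠ 0) :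
    Tendsto (fun T : ℝ =>
      (2 * Real.pi * Complex.I)⁻¹ *
        ∫ t in (-T)..T,
          Complex.exp ((Y : ℂ) * ((c : ℂ) + t * Complex.I)) / ((c : ℂ) + t * Complex.I) *
            Complex.I)
      atTop (nhds (if 0 < Y then 1 else 0)) := by
  have hYc : (Y : ℂ) ≠ 0 := Complex.ofReal_ne_zero.mpr hY
  set F : ℝ → ℂ := fun t =>
    Complex.exp ((t : ℂ) * Y * Complex.I) * (((c : ℂ) + t * Complex.I) ^ 2)⁻¹ with hF
  set φ : ℝ → ℂ := fun t => (Complex.I * Y)⁻¹ *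
    (Complex.exp ((t : ℂ) * Y * Complex.I) * ((c : ℂ) + t * Complex.I)⁻¹) with hφ
  have hφderiv : ∀ t : ℝ, HasDerivAt φ
      (Complex.exp ((t : ℂ) * Y * Complex.I) * ((c : ℂ) + t * Complex.I)⁻¹
        - (Y : ℂ)⁻¹ * F t) t := by
    intro t
    have he : HasDerivAt (fun t : ℝ => Complex.exp ((t : ℂ) * Y * Complex.I))
        (Complex.exp ((t : ℂ) * Y * Complex.I) * ((Y : ℂ) * Complex.I)) t := by
      have : HasDerivAt (fun t : ℝ => (t : ℂ) * Y * Complex.I) ((Y : ℂ) * Complex.I) t := by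
        simpa [mul_assoc] using
          (Complex.ofRealCLM.hasDerivAt (x := t)).mul_const ((Y : ℂ) * Complex.I)
      exact this.cexp
    have hl : HasDerivAt (fun t : ℝ => (c : ℂ) + t * Complex.I) Complex.I t := by
      simpa using ((Complex.ofRealCLM.hasDerivAt (x := t)).mul_const Complex.I).const_add (c : ℂ)
    have hh : HasDerivAt (fun t : ℝ => ((c : ℂ) + t * Complex.I)⁻¹)
        (-Complex.I / ((c : ℂ) + t * Complex.I) ^ 2) t := by
      have h0 : HasDerivAt (fun z : ℂ => (c : ℂ) + z * Complex.I) Complex.I (t : ℂ) := by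
        simpa using ((hasDerivAt_id ((t : ℝ) : ℂ)).mul_const Complex.I).const_add ((c : ℂ))
      exact (h0.inv (hne c hc t)).comp_ofReal
    have := (he.mul hh).const_mul ((Complex.I * Y)⁻¹)
    refine this.congr_deriv (Eq.symm ?_)
    rw [hF]
    have k1 : (Complex.I * (Y : ℂ))⁻¹ * ((Y : ℂ) * Complex.I) = 1 := by
      field_simp
    have k2 : (Complex.I * (Y : ℂ))⁻¹ * Complex.I = ((Y : ℂ))⁻¹ := by
      field_simp
    linear_combination (-(Complex.exp ((t : ℂ) * Y * Complex.I) *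
        ((c : ℂ) + t * Complex.I)⁻¹)) * k1 +
      (Complex.exp ((t : ℂ) * Y * Complex.I) *
        (((c : ℂ) + t * Complex.I) ^ 2)⁻¹) * k2
  have hcontF : Continuous F := by
    apply Continuous.mul (by fun_prop)
    exact Continuous.inv₀ (by fun_prop) (fun t => pow_ne_zero _ (hne c hc t))
  have hcontA : Continuous (fun t : ℝ =>
      Complex.exp ((t : ℂ) * Y * Complex.I) * ((c : ℂ) + t * Complex.I)⁻¹) := by
    apply Continuous.mul (by fun_prop)
    exact Continuous.inv₀ (by fun_prop) (hne c hc)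
  -- integration by parts identity
  have key : ∀ T : ℝ, ∫ t in (-T)..T,
      Complex.exp ((t : ℂ) * Y * Complex.I) * ((c : ℂ) + t * Complex.I)⁻¹
      = (φ T - φ (-T)) + (Y : ℂ)⁻¹ * ∫ t in (-T)..T, F t := by
    intro T
    have hparts := intervalIntegral.integral_eq_sub_of_hasDerivAt
      (f := φ) (a := -T) (b := T) (fun t _ => hφderiv t)
      ((hcontA.sub (continuous_const.mul hcontF)).intervalIntegrable _ _)
    rw [intervalIntegral.integral_sub (hcontA.intervalIntegrable _ _)
      ((hcontF.intervalIntegrable _ _).const_mul _),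
      intervalIntegral.integral_const_mul] at hparts
    linear_combination hparts
  -- boundary terms vanish
  have hφ0 : Tendsto (fun T : ℝ => φ T - φ (-T)) atTop (nhds 0) := by
    rw [tendsto_zero_iff_norm_tendsto_zero]
    refine squeeze_zero' (Eventually.of_forall fun T => norm_nonneg _)
      ?_ ((tendsto_const_nhds (x := 2 * ‖(Complex.I * (Y:ℂ))⁻¹‖)).div_atTop tendsto_id)
    filter_upwards [eventually_gt_atTop (0 : ℝ)] with T hT
    have hb : ∀ t : ℝ, t ≠ 0 → ‖φ t‖ ≤ ‖(Complex.I * (Y:ℂ))⁻¹‖ / |t| := by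
      intro t ht
      rw [hφ, norm_mul, norm_mul]
      have h1 : ‖Complex.exp ((t : ℂ) * Y * Complex.I)‖ = 1 := by
        rw [Complex.norm_exp]
        norm_num [Complex.mul_I_re]
      rw [h1, one_mul, norm_inv, norm_inv, div_eq_mul_inv]
      refine mul_le_mul_of_nonneg_left (inv_anti₀ (abs_pos.mpr ht) ?_)
        (inv_nonneg.mpr (norm_nonneg _))
      calc |t| = |((c : ℂ) + t * Complex.I).im| := by simp
        _ ≤ ‖(c : ℂ) + t * Complex.I‖ := Complex.abs_im_le_norm _
    calc ‖φ T - φ (-T)‖ ≤ ‖φ T‖ + ‖φ (-T)‖ := norm_sub_le _ _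
      _ ≤ ‖(Complex.I * (Y:ℂ))⁻¹‖ / |T| + ‖(Complex.I * (Y:ℂ))⁻¹‖ / |(-T)| := by
          gcongr
          exacts [hb T hT.ne', hb (-T) (neg_ne_zero.mpr hT.ne')]
      _ = 2 * ‖(Complex.I * (Y:ℂ))⁻¹‖ / id T := by
          rw [abs_neg, abs_of_pos hT]; simp [id]; ring
  -- truncated integrals of F converge
  have hJ : Tendsto (fun T : ℝ => ∫ t in (-T)..T, F t) atTop (nhds (∫ t : ℝ, F t)) :=
    intervalIntegral_tendsto_integral (F_int c Y hc)
      (tendsto_neg_atTop_atBot.comp tendsto_id) tendsto_id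
  rw [full_line_integral c Y hc hY] at hJ
  -- assemble
  set A : ℂ := (2 * Real.pi * Complex.I)⁻¹ * (Complex.exp ((Y : ℂ) * c) * Complex.I) with hA
  have heq : ∀ T : ℝ, (2 * Real.pi * Complex.I)⁻¹ *
      ∫ t in (-T)..T,
        Complex.exp ((Y : ℂ) * ((c : ℂ) + t * Complex.I)) / ((c : ℂ) + t * Complex.I) *
          Complex.I
      = A * ((φ T - φ (-T)) + (Y : ℂ)⁻¹ * ∫ t in (-T)..T, F t) := by
    intro T
    rw [← key T, hA]
    have : ∀ t : ℝ, Complex.exp ((Y : ℂ) * ((c : ℂ) + t * Complex.I)) /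
        ((c : ℂ) + t * Complex.I) * Complex.I
        = (Complex.exp ((Y : ℂ) * c) * Complex.I) *
          (Complex.exp ((t : ℂ) * Y * Complex.I) * ((c : ℂ) + t * Complex.I)⁻¹) := by
      intro t
      rw [show (Y : ℂ) * ((c : ℂ) + t * Complex.I) = (Y : ℂ) * c + (t : ℂ) * Y * Complex.I
        by ring, Complex.exp_add]
      field_simp
    rw [intervalIntegral.integral_congr (fun t _ => this t),
      intervalIntegral.integral_const_mul]
    ring
  have hlim : Tendsto (fun T : ℝ => A * ((φ T - φ (-T)) + (Y : ℂ)⁻¹ * ∫ t in (-T)..T, F t))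
      atTop (nhds (A * (0 + (Y : ℂ)⁻¹ * ((2 * π : ℝ) • gfun c Y)))) :=
    (hφ0.add (hJ.const_mul _)).const_mul A
  have hval : A * (0 + (Y : ℂ)⁻¹ * ((2 * π : ℝ) • gfun c Y))
      = (if 0 < Y then 1 else 0) := by
    rw [hA, zero_add, Complex.real_smul]
    rcases hY.lt_or_gt with h | h
    · rw [if_neg (not_lt.mpr h.le), gfun, Set.indicator_of_notMem (by simpa using h.le)]
      ring
    · rw [if_pos h, gfun, Set.indicator_of_mem (by simpa using h)]
      have hπ : (Real.pi : ℂ) ≠ 0 := Complex.ofReal_ne_zero.mpr Real.pi_ne_zero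
      have hI : Complex.I ≠ 0 := Complex.I_ne_zero
      have h2 : Complex.exp ((Y : ℂ) * c) * Complex.exp (-((c : ℂ) * Y)) = 1 := by
        rw [← Complex.exp_add]
        norm_num [mul_comm]
      have h3 : (2 * (Real.pi : ℂ) * Complex.I)⁻¹ * Complex.I * (Y : ℂ)⁻¹ *
          (2 * (π : ℝ)) * Y = 1 := by
        have hπ2 : ((π : ℝ) : ℂ) ≠ 0 := Complex.ofReal_ne_zero.mpr Real.pi_ne_zero
        push_cast
        field_simp
      calc (2 * (Real.pi : ℂ) * Complex.I)⁻¹ * (Complex.exp ((Y : ℂ) * c) * Complex.I) *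
          ((Y : ℂ)⁻¹ * (((2 * π : ℝ) : ℂ) * ((Y : ℂ) * Complex.exp (-((c : ℂ) * Y)))))
          = (Complex.exp ((Y : ℂ) * c) * Complex.exp (-((c : ℂ) * Y))) *
            ((2 * (Real.pi : ℂ) * Complex.I)⁻¹ * Complex.I * (Y : ℂ)⁻¹ *
              (2 * (π : ℝ)) * Y) := by push_cast; ring
        _ = 1 := by rw [h2, h3, one_mul]
  rw [← hval]
  exact hlim.congr (fun T => (heq T).symm)
end

section
/- For any prime p, integer k ≥ 1, and complex numbers z_1,…,z_{2k} with Re(z_j) > 1/(2k) for all j, the local Euler factor ∑ over tuples (m_1,…,m_{2k}) of nonnegative integers with m_1+⋯+m_k = m_{k+1}+⋯+m_{2k} of p^{−(m_1 z_1 + ⋯ + m_{2k} z_{2k})} converges absolutely and equals 1 + ∑_{i=1}^k ∑_{j=k+1}^{2k} p^{−(z_i+z_j)} + E_p where |E_p| ≤ C · p^{−min over pairs of Re(z_{i_1}+z_{j_1}+z_{i_2}+z_{j_2})} for a constant C depending only on k. -/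
open Finset

/-- The balanced `2k`-tuples of nonnegative integers: `m_1 + ⋯ + m_k = m_{k+1} + ⋯ + m_{2k}`. -/
def BalancedTuple (k : ℕ) : Type :=
  {f : Fin (2 * k) → ℕ //
    ∑ i ∈ univ.filter (fun i : Fin (2 * k) => (i : ℕ) < k), f i =
      ∑ i ∈ univ.filter (fun i : Fin (2 * k) => k ≤ (i : ℕ)), f i}

open Function

section Aux

lemma sum_eq_one_aux {α : Type*} [DecidableEq α] {s : Finset α} {f : α → ℕ}
    (h : ∑ i ∈ s, f i = 1) :
    ∃ i ∈ s, f i = 1 ∧ ∀ j ∈ s, j ≠ i → f j = 0 := by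
  obtain ⟨i, hi, hne⟩ := Finset.exists_ne_zero_of_sum_ne_zero (by omega : ∑ i ∈ s, f i ≠ 0)
  have h1 : f i ≤ ∑ i ∈ s, f i := Finset.single_le_sum (fun j _ => Nat.zero_le _) hi
  have he := Finset.add_sum_erase s f hi
  refine ⟨i, hi, by omega, fun j hj hji => ?_⟩
  exact (Finset.sum_eq_zero_iff).1 (by omega) j (Finset.mem_erase.2 ⟨hji, hj⟩)

lemma exists_pair_aux {α : Type*} [DecidableEq α] {s : Finset α} {f : α → ℕ}
    (h : 2 ≤ ∑ i ∈ s, f i) :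
    ∃ i₁ ∈ s, ∃ i₂ ∈ s, ∀ l,
      ((if l = i₁ then 1 else 0) + (if l = i₂ then 1 else 0)) ≤ f l := by
  by_cases hbig : ∃ i ∈ s, 2 ≤ f i
  · obtain ⟨i, hi, h2⟩ := hbig
    refine ⟨i, hi, i, hi, fun l => ?_⟩
    by_cases hl : l = i
    · subst hl; simpa using h2
    · simp [hl]
  · push_neg at hbig
    obtain ⟨i, hi, hne⟩ := Finset.exists_ne_zero_of_sum_ne_zero (by omega : ∑ i ∈ s, f i ≠ 0)
    have hfi : f i = 1 := by have := hbig i hi; omega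
    have he := Finset.add_sum_erase s f hi
    have h2 : ∑ x ∈ s.erase i, f x ≠ 0 := by omega
    obtain ⟨j, hj, hnej⟩ := Finset.exists_ne_zero_of_sum_ne_zero h2
    obtain ⟨hjne, hjs⟩ := Finset.mem_erase.1 hj
    refine ⟨i, hi, j, hjs, fun l => ?_⟩
    by_cases hl1 : l = i
    · have hlj : ¬ l = j := by subst hl1; exact fun h' => hjne h'.symm
      simp [hl1, hlj, hfi, Ne.symm hjne]
    · by_cases hl2 : l = j
      · subst hl2
        simp [hjne, Nat.one_le_iff_ne_zero, hnej]
      · simp [hl1, hl2]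

lemma summable_prod_pi : ∀ (n : ℕ) (g : Fin n → ℕ → ℝ), (∀ i, Summable (g i)) →
    (∀ i m, 0 ≤ g i m) → Summable (fun m : Fin n → ℕ => ∏ i, g i (m i)) := by
  intro n
  induction n with
  | zero =>
    intro g _ _
    haveI : Subsingleton (Fin 0 → ℕ) := ⟨fun a b => funext fun i => i.elim0⟩
    haveI : Finite (Fin 0 → ℕ) := Finite.of_subsingleton
    exact Summable.of_finite
  | succ n ih =>
    intro g hg hg0
    have hP : Summable (fun m : Fin n → ℕ => ∏ i : Fin n, g i.succ (m i)) :=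
      ih (fun i => g i.succ) (fun i => hg i.succ) (fun i m => hg0 _ _)
    have h0nn : (0 : ℕ → ℝ) ≤ g 0 := Pi.le_def.mpr fun m => hg0 0 m
    have hPnn : (0 : (Fin n → ℕ) → ℝ) ≤ fun m : Fin n → ℕ => ∏ i : Fin n, g i.succ (m i) :=
      Pi.le_def.mpr fun x => Finset.prod_nonneg fun i _ => hg0 _ _
    have h1 : Summable (fun x : ℕ × (Fin n → ℕ) =>
        g 0 x.1 * ∏ i : Fin n, g i.succ (x.2 i)) :=
      Summable.mul_of_nonneg (f := g 0)
        (g := fun m : Fin n → ℕ => ∏ i : Fin n, g i.succ (m i)) (hg 0) hP h0nn hPnn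
    have h2 : Summable ((fun m : Fin (n+1) → ℕ => ∏ i, g i (m i)) ∘
        (fun x : ℕ × (Fin n → ℕ) => (Fin.cons x.1 x.2 : ∀ _ : Fin (n+1), ℕ))) := by
      refine h1.congr fun x => ?_
      simp only [comp_apply]
      rw [Fin.prod_univ_succ]
      simp
    exact (Equiv.summable_iff
      (⟨fun x => Fin.cons x.1 x.2, fun m => (m 0, fun i => m i.succ),
        fun x => by simp, fun m => by
          funext i
          exact Fin.cases rfl (fun j => by simp) i⟩ :
        (ℕ × (Fin n → ℕ)) ≃ (Fin (n+1) → ℕ))).mp h2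

variable {k : ℕ}

/-- First-half indices. -/
abbrev Idx1 (k : ℕ) := {i : Fin (2*k) // (i : ℕ) < k}
/-- Second-half indices. -/
abbrev Idx2 (k : ℕ) := {j : Fin (2*k) // k ≤ (j : ℕ)}

/-- The elementary tuple with a `1` in position `q.1` and a `1` in position `q.2`. -/
def eTup (q : Idx1 k × Idx2 k) : Fin (2*k) → ℕ :=
  fun l => (if l = q.1.1 then 1 else 0) + (if l = q.2.1 then 1 else 0)

lemma mem_filt1 (l : Fin (2*k)) :
    l ∈ univ.filter (fun i : Fin (2*k) => (i : ℕ) < k) ↔ (l : ℕ) < k := by simp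

lemma mem_filt2 (l : Fin (2*k)) :
    l ∈ univ.filter (fun i : Fin (2*k) => k ≤ (i : ℕ)) ↔ k ≤ (l : ℕ) := by simp

lemma sum_filt1_eTup (q : Idx1 k × Idx2 k) :
    ∑ l ∈ univ.filter (fun i : Fin (2*k) => (i : ℕ) < k), eTup q l = 1 := by
  have h1 : (q.1.1 : ℕ) < k := q.1.2
  have h2 : ¬ ((q.2.1 : ℕ) < k) := by have := q.2.2; omega
  unfold eTup
  rw [Finset.sum_add_distrib, Finset.sum_ite_eq', Finset.sum_ite_eq']
  simp [mem_filt1, h1, h2]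

lemma sum_filt2_eTup (q : Idx1 k × Idx2 k) :
    ∑ l ∈ univ.filter (fun i : Fin (2*k) => k ≤ (i : ℕ)), eTup q l = 1 := by
  have h1 : ¬ (k ≤ (q.1.1 : ℕ)) := by have := q.1.2; omega
  have h2 : k ≤ (q.2.1 : ℕ) := q.2.2
  unfold eTup
  rw [Finset.sum_add_distrib, Finset.sum_ite_eq', Finset.sum_ite_eq']
  simp [mem_filt2, h1, h2]

/-- Enumeration of the balanced tuples of weight at most `2`. -/
def psi (k : ℕ) : Option (Idx1 k × Idx2 k) → BalancedTuple k
  | none => ⟨fun _ => 0, by simp⟩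
  | some q => ⟨eTup q, by rw [sum_filt1_eTup, sum_filt2_eTup]⟩

lemma eTup_ne_fst_snd (q q' : Idx1 k × Idx2 k) : q.1.1 ≠ q'.2.1 := by
  have h1 := q.1.2; have h2 := q'.2.2
  intro h
  have h3 := congrArg Fin.val h
  omega

lemma psi_inj : Function.Injective (psi k) := by
  intro o1 o2 h
  match o1, o2 with
  | none, none => rfl
  | none, some q =>
    exfalso
    have h1 := congrArg (fun x : BalancedTuple k => x.1 q.1.1) h
    simp only [psi, eTup] at h1
    rw [if_neg (eTup_ne_fst_snd q q)] at h1
    rw [if_pos trivial] at h1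
    omega
  | some q, none =>
    exfalso
    have h1 := congrArg (fun x : BalancedTuple k => x.1 q.1.1) h
    simp only [psi, eTup] at h1
    rw [if_neg (eTup_ne_fst_snd q q)] at h1
    rw [if_pos trivial] at h1
    omega
  | some q, some q' =>
    have h1 := congrArg (fun x : BalancedTuple k => x.1 q.1.1) h
    have h2 := congrArg (fun x : BalancedTuple k => x.1 q.2.1) h
    simp only [psi, eTup] at h1 h2
    rw [if_neg (eTup_ne_fst_snd q q), if_neg (eTup_ne_fst_snd q q')] at h1
    rw [if_neg (Ne.symm (eTup_ne_fst_snd q q)), if_neg (Ne.symm (eTup_ne_fst_snd q' q))] at h2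
    by_cases hii : q.1.1 = q'.1.1
    · by_cases hjj : q.2.1 = q'.2.1
      · exact congrArg some (Prod.ext (Subtype.ext hii) (Subtype.ext hjj))
      · rw [if_neg hjj] at h2
        rw [if_pos trivial] at h2
        omega
    · rw [if_neg hii] at h1
      rw [if_pos trivial] at h1
      omega

lemma range_psi (k : ℕ) : Set.range (psi k) =
    {x : BalancedTuple k |
      ∑ i ∈ univ.filter (fun i : Fin (2*k) => (i : ℕ) < k), x.1 i ≤ 1} := by
  ext x
  constructor
  · rintro ⟨o, rfl⟩
    match o with
    | none => show _ ≤ 1; simp [psi]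
    | some q => show _ ≤ 1; simp [Set.mem_setOf_eq, sum_filt1_eTup q, psi]
  · intro hx
    simp only [Set.mem_setOf_eq] at hx
    have hbal := x.2
    rcases Nat.le_one_iff_eq_zero_or_eq_one.mp hx with h0 | h1
    · refine ⟨none, ?_⟩
      apply Subtype.ext; funext l
      have h0' : ∑ i ∈ univ.filter (fun i : Fin (2*k) => k ≤ (i : ℕ)), x.1 i = 0 := by
        rw [← hbal]; exact h0
      show 0 = x.1 l
      rcases lt_or_ge (l : ℕ) k with hl | hl
      · exact ((Finset.sum_eq_zero_iff).1 h0 l ((mem_filt1 l).2 hl)).symm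
      · exact ((Finset.sum_eq_zero_iff).1 h0' l ((mem_filt2 l).2 hl)).symm
    · have h1' : ∑ i ∈ univ.filter (fun i : Fin (2*k) => k ≤ (i : ℕ)), x.1 i = 1 := by
        rw [← hbal]; exact h1
      obtain ⟨i, hiA, hfi, hotherA⟩ := sum_eq_one_aux h1
      obtain ⟨j, hjB, hfj, hotherB⟩ := sum_eq_one_aux h1'
      refine ⟨some ⟨⟨i, (mem_filt1 i).1 hiA⟩, ⟨j, (mem_filt2 j).1 hjB⟩⟩, ?_⟩
      apply Subtype.ext; funext l
      show eTup _ l = x.1 l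
      have hik : (i : ℕ) < k := (mem_filt1 i).1 hiA
      have hjk : k ≤ (j : ℕ) := (mem_filt2 j).1 hjB
      rcases lt_or_ge (l : ℕ) k with hl | hl
      · have hlj : l ≠ j := by intro h; subst h; omega
        by_cases hli : l = i
        · subst hli
          simp only [eTup, if_pos rfl, if_neg hlj, add_zero]
          exact hfi.symm
        · simp only [eTup, if_neg hli, if_neg hlj, add_zero]
          exact (hotherA l ((mem_filt1 l).2 hl) hli).symm
      · have hli : l ≠ i := by intro h; subst h; omega
        by_cases hlj : l = j
        · subst hlj
          simp only [eTup, if_pos rfl, if_neg hli, zero_add]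
          exact hfj.symm
        · simp only [eTup, if_neg hli, if_neg hlj, zero_add]
          exact (hotherB l ((mem_filt2 l).2 hl) hlj).symm

end Aux

/-- The local Euler factor `∑ p^{−(m_1 z_1 + ⋯ + m_{2k} z_{2k})}` over balanced tuples
converges absolutely and equals `1 + ∑_{i ≤ k < j} p^{−(z_i + z_j)} + E_p` with
`|E_p| ≤ C p^{−min re(z_{i_1} + z_{j_1} + z_{i_2} + z_{j_2})}`, `C` depending only on `k`. -/
theorem local_euler_factor_expansion (k : ℕ) (hk : 1 ≤ k) :
    ∃ C : ℝ, 0 < C ∧ ∀ p : ℕ, p.Prime → ∀ z : Fin (2 * k) → ℂ,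
      (∀ j, 1 / (2 * k : ℝ) < (z j).re) →
      Summable (fun f : BalancedTuple k =>
        ‖(p : ℂ) ^ (-(∑ j, (f.1 j : ℂ) * z j))‖) ∧
      ∃ E : ℂ,
        (∑' f : BalancedTuple k, (p : ℂ) ^ (-(∑ j, (f.1 j : ℂ) * z j))) =
            1 + (∑ i ∈ univ.filter (fun i : Fin (2 * k) => (i : ℕ) < k),
                  ∑ j ∈ univ.filter (fun j : Fin (2 * k) => k ≤ (j : ℕ)),
                    (p : ℂ) ^ (-(z i + z j))) + E ∧
        ‖E‖ ≤ C * (p : ℝ) ^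
          (-(sInf {r : ℝ | ∃ i₁ j₁ i₂ j₂ : Fin (2 * k),
              (i₁ : ℕ) < k ∧ (i₂ : ℕ) < k ∧ k ≤ (j₁ : ℕ) ∧ k ≤ (j₂ : ℕ) ∧
                r = (z i₁ + z j₁ + z i₂ + z j₂).re})) := by
  have hk2 : (0:ℝ) < (2 * k : ℝ) := by
    have : (0:ℕ) < 2 * k := by omega
    exact_mod_cast this
  set a : ℝ := 1 / (2 * k : ℝ) with ha_def
  have ha : 0 < a := by rw [ha_def]; positivity
  set t : ℝ := (2:ℝ) ^ (-a) with ht_def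
  have ht0 : 0 < t := Real.rpow_pos_of_pos two_pos _
  have ht1 : t < 1 := Real.rpow_lt_one_of_one_lt_of_neg one_lt_two (neg_lt_zero.mpr ha)
  have hsum_t : Summable (fun f : Fin (2*k) → ℕ => t ^ (∑ l, f l)) := by
    have h := summable_prod_pi (2*k) (fun _ m => t ^ m)
      (fun _ => summable_geometric_of_lt_one ht0.le ht1) (fun _ m => pow_nonneg ht0.le m)
    exact h.congr fun f => Finset.prod_pow_eq_pow_sum univ f t
  set D : ℝ := ∑' f : Fin (2*k) → ℕ, t ^ (∑ l, f l) with hD_def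
  have hD0 : 0 ≤ D := tsum_nonneg fun f => pow_nonneg ht0.le _
  have ht4 : (0:ℝ) < (t ^ 4)⁻¹ := by positivity
  refine ⟨(t ^ 4)⁻¹ * D + 1, by positivity, ?_⟩
  intro p hp z hz
  have hp2 : 2 ≤ p := hp.two_le
  have hp0 : (0:ℝ) < (p:ℝ) := by
    have : 0 < p := by omega
    exact_mod_cast this
  have hp1 : (1:ℝ) ≤ (p:ℝ) := by
    have : 1 ≤ p := by omega
    exact_mod_cast this
  set M : ℝ := sInf {r : ℝ | ∃ i₁ j₁ i₂ j₂ : Fin (2 * k),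
      (i₁ : ℕ) < k ∧ (i₂ : ℕ) < k ∧ k ≤ (j₁ : ℕ) ∧ k ≤ (j₂ : ℕ) ∧
        r = (z i₁ + z j₁ + z i₂ + z j₂).re} with hM_def
  have hSfin : ({r : ℝ | ∃ i₁ j₁ i₂ j₂ : Fin (2 * k),
      (i₁ : ℕ) < k ∧ (i₂ : ℕ) < k ∧ k ≤ (j₁ : ℕ) ∧ k ≤ (j₂ : ℕ) ∧
        r = (z i₁ + z j₁ + z i₂ + z j₂).re}).Finite := by
    apply Set.Finite.subset (Set.finite_range
      (fun q : Fin (2*k) × Fin (2*k) × Fin (2*k) × Fin (2*k) =>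
        (z q.1 + z q.2.1 + z q.2.2.1 + z q.2.2.2).re))
    rintro w ⟨i₁, j₁, i₂, j₂, _, _, _, _, rfl⟩
    exact ⟨(i₁, j₁, i₂, j₂), rfl⟩
  have hM_le : ∀ (i₁ i₂ : Fin (2*k)) (j₁ j₂ : Fin (2*k)),
      (i₁ : ℕ) < k → (i₂ : ℕ) < k → k ≤ (j₁ : ℕ) → k ≤ (j₂ : ℕ) →
      M ≤ (z i₁ + z j₁ + z i₂ + z j₂).re := by
    intro i₁ i₂ j₁ j₂ h1 h2 h3 h4
    exact csInf_le hSfin.bddBelow ⟨i₁, j₁, i₂, j₂, h1, h2, h3, h4, rfl⟩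
  -- norms of the terms
  have hnorm : ∀ f : Fin (2*k) → ℕ, ‖(p:ℂ) ^ (-(∑ j, (f j : ℂ) * z j))‖
      = (p:ℝ) ^ (-(∑ j, (f j : ℝ) * (z j).re)) := by
    intro f
    rw [Complex.norm_natCast_cpow_of_pos (by omega)]
    congr 1
    rw [Complex.neg_re, Complex.re_sum]
    congr 1
    refine Finset.sum_congr rfl fun l _ => ?_
    simp [Complex.mul_re]
  have hlow : ∀ f : Fin (2*k) → ℕ, ((∑ l, f l : ℕ) : ℝ) * a ≤ ∑ l, (f l : ℝ) * (z l).re := by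
    intro f
    rw [Nat.cast_sum, Finset.sum_mul]
    refine Finset.sum_le_sum fun l _ => ?_
    exact mul_le_mul_of_nonneg_left (hz l).le (Nat.cast_nonneg _)
  have hpow : ∀ N : ℕ, (p:ℝ) ^ (-((N:ℝ) * a)) ≤ t ^ N := by
    intro N
    have hbase : (p:ℝ) ^ (-a) ≤ t := by
      rw [ht_def, Real.rpow_neg hp0.le, Real.rpow_neg (by norm_num : (0:ℝ) ≤ 2)]
      refine inv_anti₀ (Real.rpow_pos_of_pos two_pos a) ?_
      exact Real.rpow_le_rpow (by norm_num) (by exact_mod_cast hp2) ha.le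
    have h1 : (p:ℝ) ^ (-((N:ℝ) * a)) = ((p:ℝ) ^ (-a)) ^ N := by
      rw [← Real.rpow_natCast ((p:ℝ) ^ (-a)) N, ← Real.rpow_mul hp0.le]
      congr 1
      ring
    rw [h1]
    exact pow_le_pow_left₀ (Real.rpow_pos_of_pos hp0 _).le hbase N
  have hterm : ∀ f : Fin (2*k) → ℕ,
      (p:ℝ) ^ (-(∑ l, (f l : ℝ) * (z l).re)) ≤ t ^ (∑ l, f l) := by
    intro f
    calc (p:ℝ) ^ (-(∑ l, (f l : ℝ) * (z l).re))
        ≤ (p:ℝ) ^ (-(((∑ l, f l : ℕ):ℝ) * a)) :=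
          Real.rpow_le_rpow_of_exponent_le hp1 (neg_le_neg (hlow f))
      _ ≤ t ^ (∑ l, f l) := hpow _
  -- summability
  have hval_inj : Function.Injective (fun x : BalancedTuple k => x.1) :=
    fun x y h => Subtype.ext h
  have hsubsum : Summable (fun x : BalancedTuple k => t ^ (∑ l, x.1 l)) :=
    hsum_t.comp_injective hval_inj
  have hsummable : Summable (fun f : BalancedTuple k =>
      ‖(p : ℂ) ^ (-(∑ j, (f.1 j : ℂ) * z j))‖) := by
    refine Summable.of_nonneg_of_le (fun f => norm_nonneg _) (fun f => ?_) hsubsum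
    rw [hnorm f.1]; exact hterm f.1
  refine ⟨hsummable, ?_⟩
  have hFsum : Summable (fun f : BalancedTuple k =>
      (p : ℂ) ^ (-(∑ j, (f.1 j : ℂ) * z j))) := hsummable.of_norm
  set L : Set (BalancedTuple k) :=
    {x : BalancedTuple k |
      ∑ i ∈ univ.filter (fun i : Fin (2*k) => (i : ℕ) < k), x.1 i ≤ 1} with hL_def
  have hsplit := hFsum.tsum_subtype_add_tsum_subtype_compl L
  -- value of the low-weight terms
  have hval_none : (p:ℂ) ^ (-(∑ j, ((psi k none).1 j : ℂ) * z j)) = 1 := by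
    have : ∀ j : Fin (2*k), (((psi k none).1 j : ℕ) : ℂ) * z j = 0 := by
      intro j; show ((0:ℕ):ℂ) * z j = 0; simp
    rw [Finset.sum_congr rfl fun j _ => this j]
    simp
  have hval_some : ∀ q : Idx1 k × Idx2 k,
      (p:ℂ) ^ (-(∑ l, ((psi k (some q)).1 l : ℂ) * z l))
        = (p:ℂ) ^ (-(z q.1.1 + z q.2.1)) := by
    intro q
    have hstep : ∀ l, (((psi k (some q)).1 l : ℕ) : ℂ) * z l =
        (if l = q.1.1 then z l else 0) + (if l = q.2.1 then z l else 0) := by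
      intro l
      show (((eTup q l : ℕ)) : ℂ) * z l = _
      simp only [eTup, Nat.cast_add, Nat.cast_ite, Nat.cast_one, Nat.cast_zero,
        add_mul, ite_mul, one_mul, zero_mul]
    rw [Finset.sum_congr rfl fun l _ => hstep l, Finset.sum_add_distrib,
      Finset.sum_ite_eq' univ q.1.1 z, Finset.sum_ite_eq' univ q.2.1 z]
    simp
  have hlowsum : (∑' x : L, (p:ℂ) ^ (-(∑ j, (((x : BalancedTuple k)).1 j : ℂ) * z j)))
      = 1 + ∑ i ∈ univ.filter (fun i : Fin (2 * k) => (i : ℕ) < k),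
          ∑ j ∈ univ.filter (fun j : Fin (2 * k) => k ≤ (j : ℕ)),
            (p : ℂ) ^ (-(z i + z j)) := by
    rw [hL_def, ← range_psi k,
      ← Equiv.tsum_eq (Equiv.ofInjective (psi k) psi_inj)]
    simp only [Equiv.ofInjective_apply]
    rw [tsum_fintype, Fintype.sum_option, hval_none]
    congr 1
    rw [Finset.sum_congr rfl fun q _ => hval_some q]
    rw [Fintype.sum_prod_type]
    rw [← Finset.sum_subtype (univ.filter fun i : Fin (2*k) => (i : ℕ) < k)
      (fun x => by simp) (fun i : Fin (2*k) =>
        ∑ j : Idx2 k, (p:ℂ) ^ (-(z i + z j.1)))]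
    refine Finset.sum_congr rfl fun i _ => ?_
    rw [← Finset.sum_subtype (univ.filter fun j : Fin (2*k) => k ≤ (j : ℕ))
      (fun x => by simp) (fun j : Fin (2*k) => (p:ℂ) ^ (-(z i + z j)))]
  refine ⟨∑' x : ↥Lᶜ, (p:ℂ) ^ (-(∑ j, (((x : BalancedTuple k)).1 j : ℂ) * z j)), ?_, ?_⟩
  · rw [← hsplit, hlowsum]
  · -- the error bound
    have h1 : Summable (fun x : ↥Lᶜ =>
        ‖(p:ℂ) ^ (-(∑ j, (((x : BalancedTuple k)).1 j : ℂ) * z j))‖) :=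
      hsummable.subtype Lᶜ
    have hEnorm := norm_tsum_le_tsum_norm h1
    have hkey : ∀ x : ↥Lᶜ, ‖(p:ℂ) ^ (-(∑ j, (((x : BalancedTuple k)).1 j : ℂ) * z j))‖ ≤
        (p:ℝ) ^ (-M) * ((t ^ 4)⁻¹ * t ^ (∑ l, ((x : BalancedTuple k)).1 l)) := by
      rintro ⟨⟨f, hbal⟩, hxc⟩
      have hxc' : ¬ (∑ i ∈ univ.filter (fun i : Fin (2*k) => (i : ℕ) < k), f i ≤ 1) := hxc
      have h2A : 2 ≤ ∑ i ∈ univ.filter (fun i : Fin (2*k) => (i : ℕ) < k), f i := by omega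
      have h2B : 2 ≤ ∑ i ∈ univ.filter (fun i : Fin (2*k) => k ≤ (i : ℕ)), f i := by
        rw [← hbal]; exact h2A
      obtain ⟨i1, hi1, i2, hi2, hIb⟩ := exists_pair_aux h2A
      obtain ⟨j1, hj1, j2, hj2, hJb⟩ := exists_pair_aux h2B
      have hi1k : (i1 : ℕ) < k := (mem_filt1 i1).1 hi1
      have hi2k : (i2 : ℕ) < k := (mem_filt1 i2).1 hi2
      have hj1k : k ≤ (j1 : ℕ) := (mem_filt2 j1).1 hj1
      have hj2k : k ≤ (j2 : ℕ) := (mem_filt2 j2).1 hj2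
      set gd : Fin (2*k) → ℕ := fun l =>
        ((if l = i1 then 1 else 0) + (if l = i2 then 1 else 0)) +
        ((if l = j1 then 1 else 0) + (if l = j2 then 1 else 0)) with hgd_def
      have hg_le : ∀ l, gd l ≤ f l := by
        intro l
        rcases lt_or_ge (l : ℕ) k with hl | hl
        · have e1 : l ≠ j1 := by intro h; subst h; omega
          have e2 : l ≠ j2 := by intro h; subst h; omega
          simp only [hgd_def, if_neg e1, if_neg e2, add_zero]
          exact hIb l
        · have e1 : l ≠ i1 := by intro h; subst h; omega
          have e2 : l ≠ i2 := by intro h; subst h; omega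
          simp only [hgd_def, if_neg e1, if_neg e2, add_zero, zero_add]
          exact hJb l
      have hsum_g : ∑ l, gd l = 4 := by
        simp only [hgd_def]
        rw [Finset.sum_add_distrib, Finset.sum_add_distrib, Finset.sum_add_distrib,
          Finset.sum_ite_eq' univ i1 (fun _ => 1), Finset.sum_ite_eq' univ i2 (fun _ => 1),
          Finset.sum_ite_eq' univ j1 (fun _ => 1), Finset.sum_ite_eq' univ j2 (fun _ => 1)]
        simp
      set N : ℕ := ∑ l, f l with hN_def
      have hN4 : 4 ≤ N := by
        rw [hN_def, ← hsum_g]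
        exact Finset.sum_le_sum fun l _ => hg_le l
      -- lower bound for the exponent
      have hgd_sum : ∑ l, (gd l : ℝ) * (z l).re =
          (z i1).re + (z i2).re + (z j1).re + (z j2).re := by
        have hstep : ∀ l, (gd l : ℝ) * (z l).re =
            ((if l = i1 then (z l).re else 0) + (if l = i2 then (z l).re else 0)) +
            ((if l = j1 then (z l).re else 0) + (if l = j2 then (z l).re else 0)) := by
          intro l
          simp only [hgd_def, Nat.cast_add, Nat.cast_ite, Nat.cast_one, Nat.cast_zero,
            add_mul, ite_mul, one_mul, zero_mul]
        rw [Finset.sum_congr rfl fun l _ => hstep l, Finset.sum_add_distrib,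
          Finset.sum_add_distrib, Finset.sum_add_distrib,
          Finset.sum_ite_eq' univ i1 (fun l => (z l).re),
          Finset.sum_ite_eq' univ i2 (fun l => (z l).re),
          Finset.sum_ite_eq' univ j1 (fun l => (z l).re),
          Finset.sum_ite_eq' univ j2 (fun l => (z l).re)]
        simp
        ring
      have hrem : ∑ l, ((f l - gd l : ℕ) : ℝ) * (z l).re ≥ ((N - 4 : ℕ) : ℝ) * a := by
        have hsub : ∑ l, (f l - gd l) = N - 4 := by
          rw [Finset.sum_tsub_distrib univ (fun l _ => hg_le l), hsum_g, hN_def]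
        calc ∑ l, ((f l - gd l : ℕ) : ℝ) * (z l).re
            ≥ ((∑ l, (f l - gd l) : ℕ) : ℝ) * a := hlow _
          _ = ((N - 4 : ℕ) : ℝ) * a := by rw [hsub]
      have hexp : (z i1 + z j1 + z i2 + z j2).re + ((N - 4 : ℕ) : ℝ) * a ≤
          ∑ l, (f l : ℝ) * (z l).re := by
        have hdecomp : ∑ l, (f l : ℝ) * (z l).re =
            ∑ l, (gd l : ℝ) * (z l).re + ∑ l, ((f l - gd l : ℕ) : ℝ) * (z l).re := by
          rw [← Finset.sum_add_distrib]
          refine Finset.sum_congr rfl fun l _ => ?_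
          have h := hg_le l
          rw [← add_mul]
          congr 1
          rw [Nat.cast_sub h]
          ring
        rw [hdecomp, hgd_sum]
        have : (z i1 + z j1 + z i2 + z j2).re =
            (z i1).re + (z i2).re + (z j1).re + (z j2).re := by
          simp [Complex.add_re]; ring
        rw [this]
        linarith [hrem]
      -- assemble the bound
      show ‖(p:ℂ) ^ (-(∑ j, (f j : ℂ) * z j))‖ ≤
        (p:ℝ) ^ (-M) * ((t ^ 4)⁻¹ * t ^ (∑ l, f l))
      rw [hnorm f]
      have hMle := hM_le i1 i2 j1 j2 hi1k hi2k hj1k hj2k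
      calc (p:ℝ) ^ (-(∑ l, (f l : ℝ) * (z l).re))
          ≤ (p:ℝ) ^ (-(M + ((N - 4 : ℕ) : ℝ) * a)) := by
            refine Real.rpow_le_rpow_of_exponent_le hp1 ?_
            have : M + ((N - 4 : ℕ) : ℝ) * a ≤ ∑ l, (f l : ℝ) * (z l).re := by
              linarith [hexp, hMle]
            linarith
        _ = (p:ℝ) ^ (-M) * (p:ℝ) ^ (-(((N - 4 : ℕ) : ℝ) * a)) := by
            rw [neg_add, Real.rpow_add hp0]
        _ ≤ (p:ℝ) ^ (-M) * ((t ^ 4)⁻¹ * t ^ N) := by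
            refine mul_le_mul_of_nonneg_left ?_ (Real.rpow_nonneg hp0.le _)
            have h1 : (p:ℝ) ^ (-(((N - 4 : ℕ) : ℝ) * a)) ≤ t ^ (N - 4) := hpow (N - 4)
            have h2 : t ^ (N - 4) = (t ^ 4)⁻¹ * t ^ N := by
              have h3 : t ^ (N - 4) * t ^ 4 = t ^ N := by
                rw [← pow_add]; congr 1; omega
              field_simp
              linarith [h3]
            rw [← h2]; exact h1
        _ = (p:ℝ) ^ (-M) * ((t ^ 4)⁻¹ * t ^ (∑ l, f l)) := by rw [hN_def]
    calc ‖∑' x : ↥Lᶜ, (p:ℂ) ^ (-(∑ j, (((x : BalancedTuple k)).1 j : ℂ) * z j))‖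
        ≤ ∑' x : ↥Lᶜ, ‖(p:ℂ) ^ (-(∑ j, (((x : BalancedTuple k)).1 j : ℂ) * z j))‖ := hEnorm
      _ ≤ ∑' fm : Fin (2*k) → ℕ, (p:ℝ) ^ (-M) * ((t ^ 4)⁻¹ * t ^ (∑ l, fm l)) := by
          refine Summable.tsum_le_tsum_of_inj (fun x : ↥Lᶜ => ((x : BalancedTuple k)).1)
            (fun x y h => Subtype.ext (Subtype.ext h))
            (fun c _ => ?_) hkey h1 ((hsum_t.mul_left _).mul_left _)
          have := Real.rpow_nonneg hp0.le (-M)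
          positivity
      _ = (p:ℝ) ^ (-M) * ((t ^ 4)⁻¹ * D) := by
          rw [tsum_mul_left, tsum_mul_left]
      _ ≤ ((t ^ 4)⁻¹ * D + 1) * (p:ℝ) ^ (-M) := by
          rw [mul_comm]
          refine mul_le_mul_of_nonneg_right ?_ (Real.rpow_nonneg hp0.le _)
          linarith
end
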